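/- Let a unit-speed, bi-Lipschitz embedding γ ∈ H²(𝕋¹; ℝ³) be given and suppose (x₀,y₀) is a distortion-realizing pair, i.e. ϑ(x₀-y₀)/|γ(x₀)-γ(y₀)| = δ_∞(γ) with ϑ(x₀-y₀) > 0. Then ϑ(x₀-y₀) ≥ (1/4)·((δ_∞(γ)-1)/(δ_∞(γ)+1))²·‖γ''‖⁻²_{L²(𝕋¹)}. -/

import Mathlib

open MeasureTheory Real
open scoped RealInnerProductSpace

/-- Geodesic distance on the torus `𝕋¹ = [-π,π]` with endpoints identified. -/
noncomputable def vartheta (z : ℝ) : ℝ :=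
  |z - 2 * π * ((round (z / (2 * π)) : ℤ) : ℝ)|

/-- Cauchy–Schwarz for real interval integrals. -/
lemma sq_intervalIntegral_le {f : ℝ → ℝ} {a b : ℝ} (hab : a ≤ b)
    (h1 : IntervalIntegrable f volume a b)
    (h2 : IntervalIntegrable (fun x => f x ^ 2) volume a b) :
    (∫ x in a..b, f x) ^ 2 ≤ (b - a) * ∫ x in a..b, f x ^ 2 := by
  rcases eq_or_lt_of_le hab with rfl | hlt
  · simp
  have hm0 : 0 < b - a := by linarith
  set c : ℝ := (∫ x in a..b, f x) / (b - a) with hc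
  have hnn : 0 ≤ ∫ x in a..b, (f x - c) ^ 2 :=
    intervalIntegral.integral_nonneg hab (fun x _ => sq_nonneg _)
  have hexp : ∀ x : ℝ, (f x - c) ^ 2 = (f x ^ 2 - (2 * c) * f x) + c ^ 2 := by
    intro x; ring
  have hI : ∫ x in a..b, (f x - c) ^ 2
      = ((∫ x in a..b, f x ^ 2) - (2 * c) * (∫ x in a..b, f x)) + (b - a) * c ^ 2 := by
    simp_rw [hexp]
    rw [intervalIntegral.integral_add (h2.sub (h1.const_mul (2 * c)))
        intervalIntegrable_const,
      intervalIntegral.integral_sub h2 (h1.const_mul (2 * c)),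
      intervalIntegral.integral_const_mul, intervalIntegral.integral_const]
    simp only [smul_eq_mul]
    try ring
  rw [hI] at hnn
  have hcm : c * (b - a) = ∫ x in a..b, f x := by
    rw [hc, div_mul_cancel₀ _ hm0.ne']
  nlinarith [hnn, hcm, hm0]

/-- A periodic function integrable over one period is interval integrable everywhere. -/
lemma periodic_intervalIntegrable_all {f : ℝ → ℝ} {T : ℝ} (hT : 0 < T)
    (hf : Function.Periodic f T) {c : ℝ}
    (hbase : IntervalIntegrable f volume c (c + T)) :
    ∀ a b : ℝ, IntervalIntegrable f volume a b := by
  have hcongr : ∀ {a b a' b' : ℝ}, a = a' → b = b' →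
      IntervalIntegrable f volume a b → IntervalIntegrable f volume a' b' := by
    rintro a b a' b' rfl rfl h; exact h
  have htrans : ∀ k : ℤ, IntervalIntegrable f volume (c + k * T) (c + (k + 1) * T) := by
    intro k
    have h := hbase.comp_sub_right ((k : ℝ) * T)
    have hfe : (fun x => f (x - (k : ℝ) * T)) = f :=
      funext fun x => (hf.int_mul k).sub_eq x
    rw [hfe] at h
    exact hcongr (by ring) (by ring) h
  have hgrow : ∀ n : ℕ, IntervalIntegrable f volume (c - n * T) (c + n * T + T) := by
    intro n
    induction n with
    | zero => simpa using hbase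
    | succ n ih =>
        have hleft : IntervalIntegrable f volume (c - (n + 1 : ℕ) * T) (c - n * T) := by
          refine hcongr ?_ ?_ (htrans (-(n + 1) : ℤ)) <;> push_cast <;> ring
        have hright : IntervalIntegrable f volume (c + n * T + T) (c + (n + 1 : ℕ) * T + T) := by
          refine hcongr ?_ ?_ (htrans ((n + 1) : ℤ)) <;> push_cast <;> ring
        exact (hleft.trans ih).trans hright
  intro a b
  obtain ⟨n, hn⟩ := exists_nat_ge ((|a| + |b| + |c|) / T)
  have hn' : |a| + |b| + |c| ≤ n * T := by
    rw [div_le_iff₀ hT] at hn; linarith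
  have habs : ∀ x : ℝ, |x| + |c| ≤ n * T → c - n * T ≤ x ∧ x ≤ c + n * T + T := by
    intro x hx
    constructor
    · linarith [le_abs_self c, neg_abs_le x, hT.le]
    · linarith [le_abs_self x, neg_abs_le c, hT.le]
  have ha := habs a (by linarith [abs_nonneg b])
  have hb := habs b (by linarith [abs_nonneg a])
  refine (hgrow n).mono_set ?_
  rw [Set.uIcc_of_le (by linarith [ha.1, ha.2] : c - n * T ≤ c + n * T + T)]
  exact Set.uIcc_subset_Icc ⟨ha.1, ha.2⟩ ⟨hb.1, hb.2⟩

/-- Key geometric estimate: the chord is almost as long as the arc, with deficit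
controlled by the `L²` norm of `γ''`. -/
lemma key_ineq {E : Type*} [NormedAddCommGroup E] [InnerProductSpace ℝ E] [CompleteSpace E]
    (γ γ' γ'' : ℝ → E) (a b : ℝ) (hab : a ≤ b)
    (hInt' : ∀ x y : ℝ, IntervalIntegrable γ' volume x y)
    (hInt'' : ∀ x y : ℝ, IntervalIntegrable γ'' volume x y)
    (hIntsq : ∀ x y : ℝ, IntervalIntegrable (fun t => ‖γ'' t‖ ^ 2) volume x y)
    (hFTC : ∀ x y : ℝ, γ y - γ x = ∫ t in x..y, γ' t)
    (hFTC' : ∀ x y : ℝ, γ' y - γ' x = ∫ t in x..y, γ'' t)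
    (hspeed : ∀ x, ‖γ' x‖ = 1) :
    (b - a) - (b - a) ^ 2 * (∫ t in a..b, ‖γ'' t‖ ^ 2) / 4 ≤ ‖γ b - γ a‖ := by
  set Q : ℝ := ∫ t in a..b, ‖γ'' t‖ ^ 2 with hQdef
  have hQ0 : 0 ≤ Q :=
    intervalIntegral.integral_nonneg hab (fun x _ => sq_nonneg _)
  -- pointwise lower bound on the inner product of tangents
  have hpt : ∀ x ∈ Set.Icc a b, 1 - (b - x) * Q / 2 ≤ ⟪γ' b, γ' x⟫ := by
    intro x hx
    have hxb : x ≤ b := hx.2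
    have h1 : ‖γ' x - γ' b‖ ≤ ∫ t in x..b, ‖γ'' t‖ := by
      rw [norm_sub_rev, hFTC' x b]
      exact intervalIntegral.norm_integral_le_integral_norm hxb
    have h2 : (∫ t in x..b, ‖γ'' t‖) ^ 2 ≤ (b - x) * ∫ t in x..b, ‖γ'' t‖ ^ 2 :=
      sq_intervalIntegral_le hxb (hInt'' x b).norm (hIntsq x b)
    have h3 : (∫ t in x..b, ‖γ'' t‖ ^ 2) ≤ Q := by
      rw [hQdef, ← intervalIntegral.integral_add_adjacent_intervals (hIntsq a x) (hIntsq x b)]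
      have : 0 ≤ ∫ t in a..x, ‖γ'' t‖ ^ 2 :=
        intervalIntegral.integral_nonneg hx.1 (fun u _ => sq_nonneg _)
      linarith
    have h4 : ‖γ' x - γ' b‖ ^ 2 ≤ (b - x) * Q := by
      have hnn : 0 ≤ ∫ t in x..b, ‖γ'' t‖ :=
        intervalIntegral.integral_nonneg hxb (fun u _ => norm_nonneg _)
      have := pow_le_pow_left₀ (norm_nonneg _) h1 2
      have hbx : 0 ≤ b - x := by linarith
      nlinarith [this, h2, h3, mul_le_mul_of_nonneg_left h3 hbx]
    have h5 : ‖γ' x - γ' b‖ ^ 2 = 2 - 2 * ⟪γ' b, γ' x⟫ := by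
      have hns := norm_sub_sq_real (γ' x) (γ' b)
      rw [hspeed x, hspeed b] at hns
      rw [real_inner_comm (γ' x) (γ' b)]
      linarith [hns]
    linarith [h4, h5.symm.le, h5.le]
  -- integrability facts
  have hint'' : IntegrableOn γ' (Set.Ioc a b) volume :=
    (intervalIntegrable_iff_integrableOn_Ioc_of_le hab).mp (hInt' a b)
  have hinner_int : IntervalIntegrable (fun x => ⟪γ' b, γ' x⟫) volume a b :=
    (intervalIntegrable_iff_integrableOn_Ioc_of_le hab).mpr (hint''.const_inner _)
  have hpoly_int : IntervalIntegrable (fun x : ℝ => 1 - (b - x) * Q / 2) volume a b :=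
    (Continuous.intervalIntegrable (by continuity) a b)
  -- relate the inner product of the chord with the endpoint tangent to an integral
  have hInner : ⟪γ' b, γ b - γ a⟫ = ∫ x in a..b, ⟪γ' b, γ' x⟫ := by
    rw [hFTC a b, intervalIntegral.integral_of_le hab, intervalIntegral.integral_of_le hab]
    exact (integral_inner hint'' (γ' b)).symm
  have hmono : (∫ x in a..b, (1 - (b - x) * Q / 2)) ≤ ∫ x in a..b, ⟪γ' b, γ' x⟫ :=
    intervalIntegral.integral_mono_on hab hpoly_int hinner_int hpt
  have hcalc : (∫ x in a..b, (1 - (b - x) * Q / 2))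
      = (b - a) - (b - a) ^ 2 * Q / 4 := by
    have hfun : (fun x : ℝ => 1 - (b - x) * Q / 2)
        = fun x : ℝ => (1 - b * Q / 2) + x * (Q / 2) := by
      funext x; ring
    rw [hfun, intervalIntegral.integral_add intervalIntegrable_const
        (intervalIntegral.intervalIntegrable_id.mul_const _),
      intervalIntegral.integral_const, intervalIntegral.integral_mul_const, integral_id]
    simp only [smul_eq_mul]
    try ring
  have hcs : ⟪γ' b, γ b - γ a⟫ ≤ ‖γ b - γ a‖ := by
    calc ⟪γ' b, γ b - γ a⟫ ≤ ‖γ' b‖ * ‖γ b - γ a‖ := real_inner_le_norm _ _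
      _ = ‖γ b - γ a‖ := by rw [hspeed b, one_mul]
  calc (b - a) - (b - a) ^ 2 * Q / 4
      = ∫ x in a..b, (1 - (b - x) * Q / 2) := hcalc.symm
    _ ≤ ∫ x in a..b, ⟪γ' b, γ' x⟫ := hmono
    _ = ⟪γ' b, γ b - γ a⟫ := hInner.symm
    _ ≤ ‖γ b - γ a‖ := hcs

set_option maxHeartbeats 1600000 in
theorem stmt18 (γ γ' γ'' : ℝ → EuclideanSpace ℝ (Fin 3)) (δ x₀ y₀ : ℝ)
    (hper : Function.Periodic γ (2 * π))
    (hper' : Function.Periodic γ' (2 * π))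
    (hper'' : Function.Periodic γ'' (2 * π))
    (hInt' : ∀ a b : ℝ, IntervalIntegrable γ' volume a b)
    (hInt'' : ∀ a b : ℝ, IntervalIntegrable γ'' volume a b)
    (hFTC : ∀ a b : ℝ, γ b - γ a = ∫ x in a..b, γ' x)
    (hFTC' : ∀ a b : ℝ, γ' b - γ' a = ∫ x in a..b, γ'' x)
    (hL2 : MemLp γ'' 2 (volume.restrict (Set.Ioc (-π) π)))
    (hspeed : ∀ x, ‖γ' x‖ = 1)
    (hδ : 0 < δ)
    (hsup : ∀ x y : ℝ, vartheta (x - y) ≤ δ * ‖γ x - γ y‖)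
    (hreal : vartheta (x₀ - y₀) = δ * ‖γ x₀ - γ y₀‖)
    (hpos : 0 < vartheta (x₀ - y₀)) :
    (1 / 4) * ((δ - 1) / (δ + 1)) ^ 2 /
        Real.sqrt ((1 / (2 * π)) * ∫ x in (-π)..π, ‖γ'' x‖ ^ 2) ^ 2 ≤
      vartheta (x₀ - y₀) := by
  have hπ0 : 0 < π := Real.pi_pos
  have hπ4 : π ≤ 4 := Real.pi_le_four
  set t : ℝ := vartheta (x₀ - y₀) with ht_def
  set d : ℝ := ‖γ x₀ - γ y₀‖ with hd_def
  set k : ℤ := round ((x₀ - y₀) / (2 * π)) with hk_def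
  set s : ℝ := (x₀ - y₀) - 2 * π * (k : ℝ) with hs_def
  have hts : t = |s| := rfl
  -- |s| ≤ π
  have hs_le : |s| ≤ π := by
    have h1 : |(x₀ - y₀) / (2 * π) - (k : ℝ)| ≤ 1 / 2 := abs_sub_round _
    have h2 : s = 2 * π * ((x₀ - y₀) / (2 * π) - (k : ℝ)) := by
      rw [hs_def]; field_simp
    rw [h2, abs_mul, abs_of_pos (by positivity : (0:ℝ) < 2 * π)]
    nlinarith [h1, hπ0]
  -- γ x₀ = γ (y₀ + s)
  have hx0 : γ x₀ = γ (y₀ + s) := by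
    have hxe : x₀ = (y₀ + s) + (k : ℝ) * (2 * π) := by rw [hs_def]; ring
    rw [hxe]
    exact (hper.int_mul k) (y₀ + s)
  -- choose an oriented arc
  obtain ⟨a, b, hab, hba, hnorm⟩ :
      ∃ a b : ℝ, a ≤ b ∧ b - a = t ∧ ‖γ x₀ - γ y₀‖ = ‖γ b - γ a‖ := by
    rcases le_total 0 s with h | h
    · exact ⟨y₀, y₀ + s, by linarith, by rw [hts, abs_of_nonneg h]; ring,
        by rw [hx0]⟩
    · exact ⟨y₀ + s, y₀, by linarith, by rw [hts, abs_of_nonpos h]; ring,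
        by rw [hx0, norm_sub_rev]⟩
  -- integrability of ‖γ''‖²
  have hper_sq : Function.Periodic (fun x => ‖γ'' x‖ ^ 2) (2 * π) := by
    intro x; simp [hper'' x]
  have hbase : IntervalIntegrable (fun x => ‖γ'' x‖ ^ 2) volume (-π) (-π + 2 * π) := by
    rw [show -π + 2 * π = π by ring]
    rw [intervalIntegrable_iff_integrableOn_Ioc_of_le (by linarith : -π ≤ π)]
    exact (memLp_two_iff_integrable_sq_norm hL2.aestronglyMeasurable).mp hL2
  have hsq_int : ∀ u v : ℝ, IntervalIntegrable (fun x => ‖γ'' x‖ ^ 2) volume u v :=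
    periodic_intervalIntegrable_all (by positivity) hper_sq hbase
  -- the arc L² quantity and the full-circle one
  set Q : ℝ := ∫ x in a..b, ‖γ'' x‖ ^ 2 with hQ_def
  set J : ℝ := ∫ x in (-π)..π, ‖γ'' x‖ ^ 2 with hJ_def
  have hQ0 : 0 ≤ Q := intervalIntegral.integral_nonneg hab (fun x _ => sq_nonneg _)
  have hJ0 : 0 ≤ J := intervalIntegral.integral_nonneg (by linarith) (fun x _ => sq_nonneg _)
  have hQJ : Q ≤ J := by
    have hb2 : b ≤ a + 2 * π := by
      have : b - a ≤ π := by rw [hba]; rw [hts]; exact hs_le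
      linarith
    have hsplit : Q + (∫ x in b..(a + 2 * π), ‖γ'' x‖ ^ 2)
        = ∫ x in a..(a + 2 * π), ‖γ'' x‖ ^ 2 :=
      intervalIntegral.integral_add_adjacent_intervals (hsq_int a b) (hsq_int b _)
    have hnn : 0 ≤ ∫ x in b..(a + 2 * π), ‖γ'' x‖ ^ 2 :=
      intervalIntegral.integral_nonneg hb2 (fun x _ => sq_nonneg _)
    have hper_int : (∫ x in a..(a + 2 * π), ‖γ'' x‖ ^ 2) = J := by
      rw [hper_sq.intervalIntegral_add_eq a (-π), hJ_def, show -π + 2 * π = π by ring]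
    linarith
  -- key estimate
  have hkey : t - t ^ 2 * Q / 4 ≤ d := by
    have h := key_ineq γ γ' γ'' a b hab hInt' hInt'' hsq_int hFTC hFTC' hspeed
    rw [hba] at h
    rw [hd_def, hnorm]
    exact h
  -- the chord is at most the arc
  have hd_le : d ≤ t := by
    rw [hd_def, hnorm, hFTC a b, ← hba]
    calc ‖∫ x in a..b, γ' x‖ ≤ ∫ x in a..b, ‖γ' x‖ :=
          intervalIntegral.norm_integral_le_integral_norm hab
      _ = b - a := by simp [hspeed, smul_eq_mul]
  have ht0 : 0 < t := hpos
  have hd0 : 0 < d := by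
    rcases lt_or_ge 0 d with h | h
    · exact h
    · exfalso
      have : t ≤ 0 := by
        rw [hreal] at ht_def
        nlinarith [hreal, hδ, h]
      linarith
  have hδ1 : 1 ≤ δ := by
    have : t = δ * d := hreal
    nlinarith [hd_le, hd0, ht0]
  -- rewrite the square root
  have hE0 : 0 ≤ 1 / (2 * π) * J := by positivity
  rw [Real.sq_sqrt hE0]
  obtain ⟨E, hEdef⟩ : ∃ E : ℝ, E = 1 / (2 * π) * J := ⟨_, rfl⟩
  rw [← hEdef]
  have hE0' : 0 ≤ E := by rw [hEdef]; exact hE0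
  have hQE : Q ≤ 2 * π * E := by
    have h2E : 2 * π * E = J := by rw [hEdef]; field_simp
    linarith [hQJ]
  rcases eq_or_lt_of_le hE0' with hE | hE
  · -- E = 0 : then Q = 0, hence t ≤ d and δ = 1
    have h2E0 : 2 * π * E = 0 := by rw [← hE]; ring
    have hQz : Q = 0 := le_antisymm (by linarith) hQ0
    have htd : t ≤ d := by nlinarith [hkey, hQz, ht0]
    have hδe : δ = 1 := by
      have ht' : t = δ * d := hreal
      nlinarith [htd, hd0, hδ1]
    have hz : (1 / 4 : ℝ) * ((δ - 1) / (δ + 1)) ^ 2 = 0 := by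
      rw [hδe]; norm_num
    rw [hz, zero_div]
    exact ht0.le
  · -- E > 0 : main computation
    rw [div_le_iff₀ hE]
    have hkey2 : δ - 1 ≤ δ * t * Q / 4 := by
      have h1 : δ * (t - t ^ 2 * Q / 4) ≤ δ * d := mul_le_mul_of_nonneg_left hkey hδ.le
      have h2 : δ * d = t := hreal.symm
      have h3 : (δ - 1) * t ≤ (δ * t * Q / 4) * t := by nlinarith [h1, h2]
      exact le_of_mul_le_mul_right h3 ht0
    have h3 : 2 * (δ - 1) ≤ π * δ * (t * E) := by
      have h4 : δ * t * Q ≤ δ * t * (2 * π * E) :=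
        mul_le_mul_of_nonneg_left hQE (by positivity)
      nlinarith [hkey2, h4]
    have e1 : π * δ * (δ - 1) ≤ 4 * δ ^ 2 := by
      nlinarith [mul_nonneg (mul_nonneg (by linarith : (0:ℝ) ≤ 4 - π) hδ.le)
        (by linarith : (0:ℝ) ≤ δ - 1), hδ.le]
    have h4 : π * δ * (δ - 1) ^ 2 ≤ 8 * (δ + 1) ^ 2 * (δ - 1) := by
      have h4a := mul_le_mul_of_nonneg_right e1 (by linarith : (0:ℝ) ≤ δ - 1)
      nlinarith [h4a, hδ.le]
    have h5 : 8 * (δ + 1) ^ 2 * (δ - 1) ≤ 4 * (δ + 1) ^ 2 * (π * δ * (t * E)) := by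
      have h5a := mul_le_mul_of_nonneg_left h3 (by positivity : (0:ℝ) ≤ 4 * (δ + 1) ^ 2)
      nlinarith [h5a]
    have h6 : (δ - 1) ^ 2 ≤ 4 * (δ + 1) ^ 2 * (t * E) := by
      have hπδ : 0 < π * δ := by positivity
      have hchain : π * δ * ((δ - 1) ^ 2) ≤ π * δ * (4 * (δ + 1) ^ 2 * (t * E)) := by
        nlinarith [h4.trans h5]
      exact le_of_mul_le_mul_left hchain hπδ
    calc (1 / 4 : ℝ) * ((δ - 1) / (δ + 1)) ^ 2
        = (δ - 1) ^ 2 / (4 * (δ + 1) ^ 2) := by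
          have hne : (δ + 1) ≠ 0 := by positivity
          field_simp
          try ring
      _ ≤ t * E := by
          rw [div_le_iff₀ (by positivity : (0:ℝ) < 4 * (δ + 1) ^ 2)]
          nlinarith [h6]
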